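/- For every universal co-Büchi k_A-register automaton A over Boolean inputs I and outputs O with initial register value d0 and every k_T ≥ 1: there exists a k_T-register transducer T over I and O (with initial register value d0) such that T ⊨ A if and only if there exists a register-less deterministic (Mealy) transducer with Boolean inputs I ∪ G_i^T and Boolean outputs O ∪ Asgn^T ∪ O_{k_T} all of whose words are accepted by hide_A(AT_B@W). -/

import Mathlib

/-- A register word automaton over Boolean signals `P`, data-domain `D`, states `Q`,
and registers indexed by `R` (for a `k`-register automaton, `R = Fin k`).
The transition function reads a Boolean letter, an input-guard and an output-guard
(comparisons of the data-values of `i` resp. `o` with the registers) and yields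
a set of (assignment, successor-state) pairs. -/
structure RegAutomaton (P D Q R : Type) where
  d0 : D
  q0 : Q
  F : Set Q
  tr : Q → (P → Bool) → (R → Bool) → (R → Bool) → Set ((R → Bool) × Q)

/-- A data-path of a register automaton on the letter sequence `(l j, di j, dout j)`. -/
structure DataPath {P D Q R : Type} [DecidableEq D] (A : RegAutomaton P D Q R)
    (l : ℕ → P → Bool) (di dout : ℕ → D) where
  st : ℕ → Q
  regs : ℕ → R → D
  asgn : ℕ → R → Bool
  init_st : st 0 = A.q0
  init_regs : ∀ n, regs 0 n = A.d0
  step : ∀ j, (asgn j, st (j + 1)) ∈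
    A.tr (st j) (l j) (fun n => decide (di j = regs j n)) (fun n => decide (dout j = regs j n))
  update : ∀ j n, regs (j + 1) n = if asgn j n then di j else regs j n

/-- The register values of the automaton `T_all` along a word: registers start at `d0`
and the value of the data-input is stored into exactly the registers named by the
`Asgn^T` signals of the letter. -/
def tallRegs {D : Type} {kT : ℕ} (d0 : D) (asg : ℕ → Fin kT → Bool) (di : ℕ → D) :
    ℕ → Fin kT → D
  | 0 => fun _ => d0
  | j + 1 => fun n => if asg j n then di j else tallRegs d0 asg di j n

/-- The product `AT = A ⊗ T_all` of a universal co-Büchi `k_A`-register automaton `A`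
over `I ∪ O` with the deterministic automaton `T_all` (`k_T` fresh registers, fresh
signals `Asgn^T` modelled by `Fin kT`): states are `Q × Bool` (the Boolean component
records whether the `T_all`-component is still in `q0`, i.e. not yet in `⊥`); the
co-Büchi set is `F^A × {q0,⊥} ∪ Q^A × {⊥}`; the `A`-component follows `δ^A` on the
`R^A`-parts of the guards, and the `T_all`-component stays alive iff the output-guard
holds for at least one `R^T`-register, storing (while alive) the data-input into exactly
the registers named by the `Asgn^T` signals. -/
def prodTall {I O D Q : Type} {kA : ℕ} (A : RegAutomaton (I ⊕ O) D Q (Fin kA)) (kT : ℕ) :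
    RegAutomaton ((I ⊕ O) ⊕ Fin kT) D (Q × Bool) (Fin kA ⊕ Fin kT) where
  d0 := A.d0
  q0 := (A.q0, true)
  F := {s | s.1 ∈ A.F ∨ s.2 = false}
  tr := fun s l gi go =>
    {x | ((fun n => x.1 (Sum.inl n)), x.2.1) ∈
           A.tr s.1 (fun p => l (Sum.inl p)) (fun n => gi (Sum.inl n)) (fun n => go (Sum.inl n)) ∧
         x.2.2 = (s.2 && decide (∃ n : Fin kT, go (Sum.inr n) = true)) ∧
         ∀ n : Fin kT, x.1 (Sum.inr n) = (x.2.2 && l (Sum.inr n))}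

/-- The transition relation of the verifier: its states are partitions of the
register set (modelled as setoids); the guard letter must respect the current partition,
and the successor partition is determined by the assignment letter. -/
def VTrans {R : Type} (pa pa' : Setoid R) (gi go a : R → Bool) : Prop :=
  (∀ m n : R, pa.r m n → gi m = gi n ∧ go m = go n) ∧
  (∀ m n : R, ¬ pa.r m n → ¬(gi m = true ∧ gi n = true) ∧ ¬(go m = true ∧ go n = true)) ∧
  (∀ m n : R, pa'.r m n ↔
    ((a m = true ∧ a n = true) ∨ (a m = false ∧ a n = true ∧ gi m = true) ∨
     (a m = true ∧ a n = false ∧ gi n = true) ∨ (a m = false ∧ a n = false ∧ pa.r m n)))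

/-- A Boolean path of the automaton `AT_B @ W`, over the signals
`I ∪ O ∪ Asgn^T ∪ G_i^A ∪ G_i^T ∪ O_{k_T} ∪ Asgn^A ∪ Asgn^T`:
`lIO` is the `2^(I∪O)` part, `asgnTP` the raw `Asgn^T` signals of `AT`'s letter,
`gi` the input-guard letter over `R^A ∪ R^T`, `ok : Fin kT` the `O_{k_T}`-encoded
register index replacing the output-guard, and `asgn` the assignment letter over
`R^A ∪ R^T`.  A step requires some output-guard `g_o` whose `R^T`-part contains the
chosen register `ok j`, a joint transition of the Boolean associate of `AT = A ⊗ T_all`,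
and a verifier transition on the partitions of `R^A ∪ R^T` (starting from the one-block
partition `⊤`). -/
structure WPath {I O D Q : Type} {kA : ℕ} (A : RegAutomaton (I ⊕ O) D Q (Fin kA))
    (kT : ℕ) where
  st : ℕ → Q × Bool
  part : ℕ → Setoid (Fin kA ⊕ Fin kT)
  lIO : ℕ → (I ⊕ O) → Bool
  asgnTP : ℕ → Fin kT → Bool
  gi : ℕ → (Fin kA ⊕ Fin kT) → Bool
  ok : ℕ → Fin kT
  asgn : ℕ → (Fin kA ⊕ Fin kT) → Bool
  init_st : st 0 = (A.q0, true)
  init_part : part 0 = ⊤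
  step : ∀ j, ∃ go : (Fin kA ⊕ Fin kT) → Bool,
    go (Sum.inr (ok j)) = true ∧
    (asgn j, st (j + 1)) ∈
      (prodTall A kT).tr (st j) (Sum.elim (lIO j) (asgnTP j)) (gi j) go ∧
    VTrans (part j) (part (j + 1)) (gi j) go (asgn j)

/-- A data-path of `AT = A ⊗ T_all` corresponds to a Boolean path of `AT_B @ W` iff they
visit the same states, carry the same `2^(I ∪ O ∪ Asgn^T)`-letters, the input-guard and
assignment signals encode the comparisons and assignments of the data-path at every step,
and the `O_{k_T}`-letter at each step encodes some register `r^T_j` whose current value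
equals the data-path's value of the data-output at that step. -/
def CorrW {I O D Q : Type} [DecidableEq D] {kA kT : ℕ}
    {A : RegAutomaton (I ⊕ O) D Q (Fin kA)}
    {l : ℕ → ((I ⊕ O) ⊕ Fin kT) → Bool} {di dout : ℕ → D}
    (dp : DataPath (prodTall A kT) l di dout) (wp : WPath A kT) : Prop :=
  (∀ j, wp.st j = dp.st j) ∧
  (∀ j p, wp.lIO j p = l j (Sum.inl p)) ∧
  (∀ j n, wp.asgnTP j n = l j (Sum.inr n)) ∧
  (∀ j r, wp.gi j r = decide (di j = dp.regs j r)) ∧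
  (∀ j, wp.asgn j = dp.asgn j) ∧
  (∀ j, dout j = dp.regs j (Sum.inr (wp.ok j)))

/-- A path of the automaton `hide_A(AT_B @ W)`, over the visible signals
`I ∪ O ∪ Asgn^T ∪ G_i^T ∪ O_{k_T} ∪ Asgn^T`: same states as `AT_B @ W`; a step on a
letter exists iff `AT_B @ W` has a transition on some letter agreeing with it on the
visible signals (the hidden signals `G_i^A` and `Asgn^A` are existentially chosen). -/
structure HPath {I O D Q : Type} {kA : ℕ} (A : RegAutomaton (I ⊕ O) D Q (Fin kA))
    (kT : ℕ) where
  st : ℕ → Q × Bool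
  part : ℕ → Setoid (Fin kA ⊕ Fin kT)
  lIO : ℕ → (I ⊕ O) → Bool
  asgnTP : ℕ → Fin kT → Bool
  giT : ℕ → Fin kT → Bool
  ok : ℕ → Fin kT
  asgnT : ℕ → Fin kT → Bool
  init_st : st 0 = (A.q0, true)
  init_part : part 0 = ⊤
  step : ∀ j, ∃ (giA : Fin kA → Bool) (asgnA : Fin kA → Bool)
      (go : (Fin kA ⊕ Fin kT) → Bool),
    go (Sum.inr (ok j)) = true ∧
    (Sum.elim asgnA (asgnT j), st (j + 1)) ∈
      (prodTall A kT).tr (st j) (Sum.elim (lIO j) (asgnTP j)) (Sum.elim giA (giT j)) go ∧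
    VTrans (part j) (part (j + 1)) (Sum.elim giA (giT j)) go (Sum.elim asgnA (asgnT j))

/-- A path of `AT_B @ W` corresponds to a path of `hide_A(AT_B @ W)` iff they visit the
same states and their letters agree on the visible signals
`I ∪ O ∪ Asgn^T ∪ G_i^T ∪ O_{k_T} ∪ Asgn^T`. -/
def CorrWH {I O D Q : Type} {kA kT : ℕ} {A : RegAutomaton (I ⊕ O) D Q (Fin kA)}
    (wp : WPath A kT) (hp : HPath A kT) : Prop :=
  (∀ j, hp.st j = wp.st j) ∧ (∀ j, hp.part j = wp.part j) ∧
  (∀ j, hp.lIO j = wp.lIO j) ∧ (∀ j, hp.asgnTP j = wp.asgnTP j) ∧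
  (∀ j n, hp.giT j n = wp.gi j (Sum.inr n)) ∧
  (∀ j, hp.ok j = wp.ok j) ∧
  (∀ j n, hp.asgnT j n = wp.asgn j (Sum.inr n))

/-- A `k`-register transducer with Boolean inputs `I`, Boolean outputs `O`,
data-domain `D` and (possibly infinite) state set `S`. -/
structure RegTransducer (I O D S : Type) (k : ℕ) where
  s0 : S
  d0 : D
  tr : S → (I → Bool) → (Fin k → Bool) → (O → Bool) × Fin k × (Fin k → Bool) × S

/-- `(lio, di, dout)` is a word of the register transducer `T`
(an element of `L(T) ⊆ (2^(I∪O) × D × D)^ω`). -/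
def IsWordOf {I O D S : Type} [DecidableEq D] {kT : ℕ} (T : RegTransducer I O D S kT)
    (lio : ℕ → (I ⊕ O) → Bool) (di dout : ℕ → D) : Prop :=
  ∃ (st : ℕ → S) (regs : ℕ → Fin kT → D),
    st 0 = T.s0 ∧ (∀ n, regs 0 n = T.d0) ∧
    ∀ j,
      let r := T.tr (st j) (fun a => lio j (Sum.inl a)) (fun n => decide (di j = regs j n))
      st (j + 1) = r.2.2.2 ∧ (∀ b, lio j (Sum.inr b) = r.1 b) ∧
      dout j = regs j r.2.1 ∧
      (∀ n, regs (j + 1) n = if r.2.2.1 n then di j else regs j n)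

/-- `(inp, giT, outp, asgnT, ok)` is a word of the Boolean associate `T_B` of `T`:
a register-less deterministic transducer with Boolean inputs `I ∪ G_i^T` and Boolean
outputs `O ∪ Asgn^T ∪ O_{k_T}`. -/
def IsBoolWordOf {I O D S : Type} {kT : ℕ} (T : RegTransducer I O D S kT)
    (inp : ℕ → I → Bool) (giT : ℕ → Fin kT → Bool)
    (outp : ℕ → O → Bool) (asgnT : ℕ → Fin kT → Bool) (ok : ℕ → Fin kT) : Prop :=
  ∃ st : ℕ → S, st 0 = T.s0 ∧
    ∀ j,
      let r := T.tr (st j) (inp j) (giT j)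
      st (j + 1) = r.2.2.2 ∧ outp j = r.1 ∧ ok j = r.2.1 ∧ asgnT j = r.2.2.1

/-- A register-less deterministic (Mealy) transducer with input letters `Inp`,
output letters `Out` and (finite or infinite) state set `S`. -/
structure Mealy (Inp Out S : Type) where
  s0 : S
  tr : S → Inp → Out × S


open Classical in
noncomputable def pickDi {D R : Type} [Infinite D] [Finite R] (regs : R → D) (g : R → Bool) : D :=
  if h : ∃ r, g r = true then regs h.choose
  else ((Set.finite_range regs).infinite_compl).nonempty.choose

theorem pickDi_spec {D R : Type} [Infinite D] [DecidableEq D] [Finite R]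
    (regs : R → D) (g : R → Bool)
    (hblock : ∀ m n, regs m = regs n → g m = g n)
    (hsep : ∀ m n, g m = true → g n = true → regs m = regs n) :
    ∀ r, pickDi regs g = regs r ↔ g r = true := by
  intro r
  unfold pickDi
  split
  · rename_i h
    constructor
    · intro he
      rw [show g r = g h.choose from (hblock _ _ he.symm)]
      exact h.choose_spec
    · intro hr
      exact hsep _ _ h.choose_spec hr
  · rename_i h
    have hfresh := ((Set.finite_range regs).infinite_compl).nonempty.choose_spec
    constructor
    · intro he; exact absurd ⟨r, he.symm⟩ hfresh
    · intro hr; exact absurd ⟨r, hr⟩ h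

noncomputable def hRegs {D R : Type} [Infinite D] [Finite R] (d0 : D)
    (Gi Asgn : ℕ → R → Bool) : ℕ → R → D
  | 0 => fun _ => d0
  | j + 1 => fun r => if Asgn j r then pickDi (hRegs d0 Gi Asgn j) (Gi j)
      else hRegs d0 Gi Asgn j r

theorem setoid_top_rel {α : Type} (m n : α) : (⊤ : Setoid α).r m n := by
  rw [show ((⊤ : Setoid α).r) = ⇑(⊤ : Setoid α) from rfl, Setoid.top_def]; trivial

/-- there exists a `k_T`-register transducer `T` over `I` and `O` (with
the initial register value of `A`) with `T ⊨ A` (every word of `T` is accepted by the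
universal co-Büchi automaton `A`) iff there exists a register-less deterministic Mealy
transducer with Boolean inputs `I ∪ G_i^T` and Boolean outputs `O ∪ Asgn^T ∪ O_{k_T}`
all of whose words are accepted by `hide_A(AT_B @ W)` (every path of `hide_A(AT_B @ W)`
carrying such a word visits the co-Büchi set only finitely often). -/
theorem stmt13 (D I O Q : Type) [Infinite D] [DecidableEq D]
    [Finite I] [Finite O] [Finite Q]
    (kA kT : ℕ) (hkT : 1 ≤ kT) (A : RegAutomaton (I ⊕ O) D Q (Fin kA)) :
    (∃ (S : Type) (T : RegTransducer I O D S kT), T.d0 = A.d0 ∧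
        ∀ (lio : ℕ → (I ⊕ O) → Bool) (di dout : ℕ → D),
          IsWordOf T lio di dout →
          ∀ dp : DataPath A lio di dout, ∃ N, ∀ j, N ≤ j → dp.st j ∉ A.F) ↔
    (∃ (S : Type)
        (M : Mealy ((I → Bool) × (Fin kT → Bool))
          ((O → Bool) × (Fin kT → Bool) × Fin kT) S),
        ∀ (inp : ℕ → I → Bool) (giT : ℕ → Fin kT → Bool) (outp : ℕ → O → Bool)
          (asgnT : ℕ → Fin kT → Bool) (ok : ℕ → Fin kT),
          (∃ st : ℕ → S, st 0 = M.s0 ∧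
            ∀ j, M.tr (st j) (inp j, giT j) = ((outp j, asgnT j, ok j), st (j + 1))) →
          ∀ hp : HPath A kT,
            (∀ j, hp.lIO j = Sum.elim (inp j) (outp j)) →
            (∀ j, hp.asgnTP j = asgnT j) →
            (∀ j, hp.giT j = giT j) →
            (∀ j, hp.ok j = ok j) →
            (∀ j, hp.asgnT j = asgnT j) →
            ∃ N, ∀ j, N ≤ j → ¬((hp.st j).1 ∈ A.F ∨ (hp.st j).2 = false)) := by
  constructor
  · rintro ⟨S, T, hd0, hT⟩
    refine ⟨S, ⟨T.s0, fun s ig =>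
      ((let r := T.tr s ig.1 ig.2; (r.1, r.2.2.1, r.2.1)),
        (T.tr s ig.1 ig.2).2.2.2)⟩, ?_⟩
    rintro inp giT outp asgnT ok ⟨mst, hmst0, hmstep⟩ hp hlio hasgnTP hgiT hok hasgnT
    classical
    choose giA asgnA go hgo hmem hV using hp.step
    set regs : ℕ → (Fin kA ⊕ Fin kT) → D :=
      hRegs A.d0 (fun j => Sum.elim (giA j) (hp.giT j))
        (fun j => Sum.elim (asgnA j) (hp.asgnT j)) with hregs
    set di : ℕ → D := fun j => pickDi (regs j) (Sum.elim (giA j) (hp.giT j)) with hdidef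
    set dout : ℕ → D := fun j => regs j (Sum.inr (hp.ok j)) with hdoutdef
    have hregs_succ : ∀ j r,
        regs (j+1) r = if Sum.elim (asgnA j) (hp.asgnT j) r = true then di j else regs j r :=
      fun j r => rfl
    have hInv : ∀ j m n, (hp.part j).r m n ↔ regs j m = regs j n := by
      intro j
      induction j with
      | zero =>
        intro m n
        rw [hp.init_part]
        constructor
        · intro _
          show regs 0 m = regs 0 n
          rfl
        · intro _; exact setoid_top_rel m n
      | succ j ih =>
        obtain ⟨h1, h2, h3⟩ := hV j
        have hdisp : ∀ r, di j = regs j r ↔ Sum.elim (giA j) (hp.giT j) r = true := by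
          apply pickDi_spec
          · intro m n hmn
            exact (h1 m n ((ih m n).mpr hmn)).1
          · intro m n hm hn
            by_contra hne
            exact ((h2 m n (fun hr => hne ((ih m n).mp hr))).1) ⟨hm, hn⟩
        intro m n
        rw [h3 m n, hregs_succ, hregs_succ]
        rcases ham : Sum.elim (asgnA j) (hp.asgnT j) m <;>
          rcases han : Sum.elim (asgnA j) (hp.asgnT j) n <;>
          simp [ham, han]
        · exact ih m n
        · exact (hdisp m).symm.trans eq_comm
        · exact (hdisp n).symm
    have hdiSpec : ∀ j r, di j = regs j r ↔ Sum.elim (giA j) (hp.giT j) r = true := by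
      intro j
      obtain ⟨h1, h2, h3⟩ := hV j
      apply pickDi_spec
      · intro m n hmn
        exact (h1 m n ((hInv j m n).mpr hmn)).1
      · intro m n hm hn
        by_contra hne
        exact ((h2 m n (fun hr => hne ((hInv j m n).mp hr))).1) ⟨hm, hn⟩
    have hgoSpec : ∀ j r, go j r = true ↔ dout j = regs j r := by
      intro j r
      obtain ⟨h1, h2, h3⟩ := hV j
      constructor
      · intro hr
        by_cases he : regs j r = regs j (Sum.inr (hp.ok j))
        · exact he.symm
        · exact absurd ⟨hr, hgo j⟩
            ((h2 r _ (fun hrel => he ((hInv j _ _).mp hrel))).2)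
      · intro he
        have heq : regs j r = regs j (Sum.inr (hp.ok j)) := he.symm
        have hgg := (h1 r _ ((hInv j _ _).mpr heq)).2
        rw [hgg]; exact hgo j
    have hsnd : ∀ j, (hp.st j).2 = true := by
      intro j
      induction j with
      | zero => rw [hp.init_st]
      | succ j ih =>
        obtain ⟨hA, hb, hx⟩ := hmem j
        rw [hb, ih]
        simp only [Bool.true_and, decide_eq_true_eq]
        exact ⟨hp.ok j, hgo j⟩
    set dpA : DataPath A hp.lIO di dout := {
      st := fun j => (hp.st j).1
      regs := fun j n => regs j (Sum.inl n)
      asgn := asgnA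
      init_st := by show (hp.st 0).1 = A.q0; rw [hp.init_st]
      init_regs := fun n => rfl
      step := by
        intro j
        obtain ⟨hA, hb, hx⟩ := hmem j
        have e1 : (fun n => decide (di j = regs j (Sum.inl n))) = giA j := by
          funext n
          by_cases hq : di j = regs j (Sum.inl n)
          · rw [decide_eq_true hq]
            exact ((hdiSpec j (Sum.inl n)).mp hq).symm
          · rw [decide_eq_false hq]
            rcases hg : giA j n
            · rfl
            · exact absurd ((hdiSpec j (Sum.inl n)).mpr hg) hq
        have e2 : (fun n => decide (dout j = regs j (Sum.inl n))) =
            (fun n => go j (Sum.inl n)) := by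
          funext n
          by_cases hq : dout j = regs j (Sum.inl n)
          · rw [decide_eq_true hq]
            exact ((hgoSpec j (Sum.inl n)).mpr hq).symm
          · rw [decide_eq_false hq]
            rcases hg : go j (Sum.inl n)
            · rfl
            · exact absurd ((hgoSpec j (Sum.inl n)).mp hg) hq
        simpa only [← e1, ← e2, Sum.elim_inl] using hA
      update := fun j n => hregs_succ j (Sum.inl n) } with hdpA
    have hword : IsWordOf T hp.lIO di dout := by
      refine ⟨mst, fun j n => regs j (Sum.inr n), hmst0, fun n => by rw [hd0]; rfl, ?_⟩
      intro j
      have e1 : (fun a => hp.lIO j (Sum.inl a)) = inp j := by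
        funext a; rw [hlio j]; rfl
      have e2 : (fun n => decide (di j = regs j (Sum.inr n))) = giT j := by
        funext n
        rw [← hgiT j]
        by_cases hq : di j = regs j (Sum.inr n)
        · rw [decide_eq_true hq]
          exact ((hdiSpec j (Sum.inr n)).mp hq).symm
        · rw [decide_eq_false hq]
          rcases hg : hp.giT j n
          · rfl
          · exact absurd ((hdiSpec j (Sum.inr n)).mpr hg) hq
      have hm := hmstep j
      have c1 : (T.tr (mst j) (inp j) (giT j)).1 = outp j := congrArg (fun x => x.1.1) hm
      have c2 : (T.tr (mst j) (inp j) (giT j)).2.2.1 = asgnT j := congrArg (fun x => x.1.2.1) hm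
      have c3 : (T.tr (mst j) (inp j) (giT j)).2.1 = ok j := congrArg (fun x => x.1.2.2) hm
      have c4 : (T.tr (mst j) (inp j) (giT j)).2.2.2 = mst (j + 1) := congrArg (fun x => x.2) hm
      simp only [e1, e2]
      refine ⟨c4.symm, ?_, ?_, ?_⟩
      · intro b; rw [hlio j, c1]; rfl
      · rw [c3, ← hok j]
      · intro n
        rw [c2, ← hasgnT j]
        exact hregs_succ j (Sum.inr n)
    obtain ⟨N, hN⟩ := hT hp.lIO di dout hword dpA
    refine ⟨N, fun j hj => ?_⟩
    rintro (hF | hf)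
    · exact hN j hj hF
    · rw [hsnd j] at hf
      exact Bool.noConfusion hf
  · rintro ⟨S, M, hM⟩
    refine ⟨S, ⟨M.s0, A.d0, fun s i g =>
      (let m := M.tr s (i, g); (m.1.1, m.1.2.2, m.1.2.1, m.2))⟩, rfl, ?_⟩
    rintro lio di dout ⟨tst, tregs, h0, hr0, hstep⟩ dp
    classical
    set inp : ℕ → I → Bool := fun j a => lio j (Sum.inl a) with hinp
    set giT : ℕ → Fin kT → Bool := fun j n => decide (di j = tregs j n) with hgiTdef
    set outp : ℕ → O → Bool := fun j b => lio j (Sum.inr b) with houtp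
    set mres := fun j => M.tr (tst j) (inp j, giT j) with hmres
    set asgnT : ℕ → Fin kT → Bool := fun j => (mres j).1.2.1 with hasgnTdef
    set okf : ℕ → Fin kT := fun j => (mres j).1.2.2 with hokfdef
    have hstep' : ∀ j, tst (j+1) = (mres j).2 ∧ (∀ b, lio j (Sum.inr b) = (mres j).1.1 b)
        ∧ dout j = tregs j (okf j)
        ∧ (∀ n, tregs (j+1) n = if asgnT j n then di j else tregs j n) := fun j => hstep j
    set fr : ℕ → (Fin kA ⊕ Fin kT) → D := fun j => Sum.elim (dp.regs j) (tregs j) with hfr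
    have hker : ∀ (j : ℕ) m n, (Setoid.ker (fr j)).r m n ↔ fr j m = fr j n :=
      fun _ _ _ => Iff.rfl
    have hfrupd : ∀ j r, fr (j+1) r =
        if Sum.elim (dp.asgn j) (asgnT j) r = true then di j else fr j r := by
      intro j r; rcases r with n | n
      · simpa [hfr] using dp.update j n
      · simpa [hfr] using (hstep' j).2.2.2 n
    set hp : HPath A kT := {
      st := fun j => (dp.st j, true)
      part := fun j => Setoid.ker (fr j)
      lIO := lio
      asgnTP := asgnT
      giT := giT
      ok := okf
      asgnT := asgnT
      init_st := by show (dp.st 0, true) = (A.q0, true); rw [dp.init_st]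
      init_part := by
        apply Setoid.ext
        intro a b
        constructor
        · intro _; exact setoid_top_rel a b
        · intro _
          show fr 0 a = fr 0 b
          rcases a with n | n <;> rcases b with m | m <;>
            simp [hfr, dp.init_regs, hr0 _]
      step := by
        intro j
        refine ⟨fun n => decide (di j = dp.regs j n), dp.asgn j,
          fun rr => decide (dout j = fr j rr), ?_, ?_, ?_⟩
        · simp [hfr, (hstep' j).2.2.1]
        · refine ⟨?_, ?_, ?_⟩
          · exact dp.step j
          · have hex : ∃ n : Fin kT, dout j = fr j (Sum.inr n) :=
              ⟨okf j, by simp [hfr, (hstep' j).2.2.1]⟩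
            simp [hex]
          · intro n; simp
        · have hgieq : ∀ rr, Sum.elim (fun n => decide (di j = dp.regs j n)) (giT j) rr
              = decide (di j = fr j rr) := by rintro (n | n) <;> rfl
          refine ⟨?_, ?_, ?_⟩
          · intro m n hmn
            have hmn' : fr j m = fr j n := hmn
            constructor
            · rw [hgieq, hgieq, hmn']
            · show decide (dout j = fr j m) = decide (dout j = fr j n)
              rw [hmn']
          · intro m n hmn
            have hmn' : ¬ fr j m = fr j n := fun h => hmn h
            constructor
            · rintro ⟨h1, h2⟩
              rw [hgieq] at h1 h2
              exact hmn' ((of_decide_eq_true h1).symm.trans (of_decide_eq_true h2))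
            · rintro ⟨h1, h2⟩
              exact hmn' ((of_decide_eq_true h1).symm.trans (of_decide_eq_true h2))
          · intro m n
            have lhs : (Setoid.ker (fr (j+1))).r m n ↔ fr (j+1) m = fr (j+1) n := Iff.rfl
            rw [lhs, hfrupd, hfrupd, hker]
            rcases ham : Sum.elim (dp.asgn j) (asgnT j) m <;>
              rcases han : Sum.elim (dp.asgn j) (asgnT j) n <;>
              simp [ham, han, hgieq, eq_comm] }
    have hrun : ∀ j, M.tr (tst j) (inp j, giT j) = ((outp j, asgnT j, okf j), tst (j + 1)) := by
      intro j
      have h1 := (hstep' j).1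
      have h2 := (hstep' j).2.1
      have ho : (mres j).1.1 = outp j := by funext b; rw [houtp]; exact (h2 b).symm
      calc mres j = (((mres j).1.1, (mres j).1.2.1, (mres j).1.2.2), (mres j).2) := rfl
        _ = ((outp j, asgnT j, okf j), tst (j+1)) := by rw [ho, h1]
    have hlio : ∀ j, hp.lIO j = Sum.elim (inp j) (outp j) := by
      intro j; funext p; rcases p with a | b <;> rfl
    obtain ⟨N, hN⟩ := hM inp giT outp asgnT okf ⟨tst, h0, hrun⟩ hp hlio
      (fun j => rfl) (fun j => rfl) (fun j => rfl) (fun j => rfl)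
    refine ⟨N, fun j hj => ?_⟩
    have hnf := hN j hj
    intro hF
    exact hnf (Or.inl hF)
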